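/- Origin of the edge labelling for factorized cross-ratios (Theorem 'Origin of the edge labelling for factorized cross-ratios', planar case): Let f, f₁, f₁₂, f₂ ∈ ℂ be four pairwise distinct concyclic points (lying on a common circle in ℂ ≅ ℝ²) whose diagonals intersect: there is a point M ∈ ℂ, distinct from the four vertices, lying on the real line through f and f₁₂ and on the real line through f₁ and f₂; let ρ, σ be the nonzero real numbers with f₁₂ − M = ρ(f − M) and f₂ − M = σ(f₁ − M). Then the complex cross-ratio satisfies ((f − f₁)(f₁₂ − f₂)) / ((f₁ − f₁₂)(f₂ − f)) = σ·|f₁ − f|²/|f₂ − f|². In particular, if s, s₁, s₂, s₁₂ are nonzero reals with ρ = s₁₂/s and σ = s₂/s₁, and α₁ = |f₁ − f|²/(s·s₁), α₂ = |f₂ − f|²/(s·s₂), then this cross-ratio equals α₁/α₂. -/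

import Mathlib

open Complex in
private lemma norm_sq_conj_aux (z : ℂ) : ((‖z‖ : ℝ) : ℂ) ^ 2 = z * (starRingEnd ℂ) z := by
  rw [Complex.mul_conj, Complex.normSq_eq_norm_sq]
  push_cast
  ring

set_option maxHeartbeats 1000000 in
/-- Origin of the edge labelling for factorized cross-ratios (planar case):
for a concyclic quadrilateral `(f, f₁, f₁₂, f₂)` in `ℂ` whose diagonals
intersect at `M` with real ratios `ρ = l(M,f₁₂)/l(M,f)`,
`σ = l(M,f₂)/l(M,f₁)`, the complex cross-ratio equals
`σ ‖f₁ − f‖² / ‖f₂ − f‖²`; in particular, with `ρ = s₁₂/s`, `σ = s₂/s₁` and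
`α₁ = ‖f₁ − f‖²/(s s₁)`, `α₂ = ‖f₂ − f‖²/(s s₂)`, it equals `α₁/α₂`. -/
theorem cross_ratio_from_discrete_metric
    (f f₁ f₁₂ f₂ M : ℂ)
    (hd1 : f ≠ f₁) (hd2 : f ≠ f₁₂) (hd3 : f ≠ f₂)
    (hd4 : f₁ ≠ f₁₂) (hd5 : f₁ ≠ f₂) (hd6 : f₁₂ ≠ f₂)
    (hcirc : ∃ (c : ℂ) (r : ℝ), ‖f - c‖ = r ∧ ‖f₁ - c‖ = r ∧
      ‖f₁₂ - c‖ = r ∧ ‖f₂ - c‖ = r)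
    (hM : M ≠ f ∧ M ≠ f₁ ∧ M ≠ f₁₂ ∧ M ≠ f₂)
    (ρ σ : ℝ) (hρ0 : ρ ≠ 0) (hσ0 : σ ≠ 0)
    (hρ : f₁₂ - M = (ρ : ℂ) * (f - M)) (hσ : f₂ - M = (σ : ℂ) * (f₁ - M)) :
    ((f - f₁) * (f₁₂ - f₂)) / ((f₁ - f₁₂) * (f₂ - f)) =
        (σ : ℂ) * (‖f₁ - f‖ : ℂ) ^ 2 / (‖f₂ - f‖ : ℂ) ^ 2 ∧
      ∀ s s₁ s₂ s₁₂ α₁ α₂ : ℝ, s ≠ 0 → s₁ ≠ 0 → s₂ ≠ 0 → s₁₂ ≠ 0 →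
        ρ = s₁₂ / s → σ = s₂ / s₁ →
        α₁ = ‖f₁ - f‖ ^ 2 / (s * s₁) → α₂ = ‖f₂ - f‖ ^ 2 / (s * s₂) →
        ((f - f₁) * (f₁₂ - f₂)) / ((f₁ - f₁₂) * (f₂ - f)) = ((α₁ / α₂ : ℝ) : ℂ) := by
  obtain ⟨c, r, h0, h1, h12, h2⟩ := hcirc
  obtain ⟨hMf, hMf1, hMf12, hMf2⟩ := hM
  have hf12 : f₁₂ = M + (ρ : ℂ) * (f - M) := by linear_combination hρ
  have hf2 : f₂ = M + (σ : ℂ) * (f₁ - M) := by linear_combination hσ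
  subst hf12 hf2
  -- ρ ≠ 1 and σ ≠ 1
  have hρ1 : (ρ : ℂ) ≠ 1 := by
    intro h
    apply hd2
    rw [h]; ring
  have hσ1 : (σ : ℂ) ≠ 1 := by
    intro h
    apply hd5
    rw [h]; ring
  -- circle equations in complex-conjugate form
  have sqeq : ∀ z : ℂ, ‖z - c‖ = r → (z - c) * (starRingEnd ℂ) (z - c) = ((r : ℝ) : ℂ) ^ 2 := by
    intro z hz
    rw [← norm_sq_conj_aux, hz]
  have E0 := sqeq f h0
  have E1 := sqeq f₁ h1
  have E2 := sqeq _ h12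
  have E3 := sqeq _ h2
  simp only [map_add, map_sub, map_mul, Complex.conj_ofReal] at E0 E1 E2 E3
  -- power of the point M
  have key1 : ((ρ : ℂ) - 1) * ((ρ : ℂ) * ((f - M) * ((starRingEnd ℂ) f - (starRingEnd ℂ) M))
      - ((M - c) * ((starRingEnd ℂ) M - (starRingEnd ℂ) c) - ((r : ℝ) : ℂ) ^ 2)) = 0 := by
    linear_combination E2 - (ρ : ℂ) * E0
  have key2 : ((σ : ℂ) - 1) * ((σ : ℂ) * ((f₁ - M) * ((starRingEnd ℂ) f₁ - (starRingEnd ℂ) M))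
      - ((M - c) * ((starRingEnd ℂ) M - (starRingEnd ℂ) c) - ((r : ℝ) : ℂ) ^ 2)) = 0 := by
    linear_combination E3 - (σ : ℂ) * E1
  have hρ1' : (ρ : ℂ) - 1 ≠ 0 := sub_ne_zero.mpr hρ1
  have hσ1' : (σ : ℂ) - 1 ≠ 0 := sub_ne_zero.mpr hσ1
  have key1' := (mul_eq_zero.mp key1).resolve_left hρ1'
  have key2' := (mul_eq_zero.mp key2).resolve_left hσ1'
  have hkey : (ρ : ℂ) * ((f - M) * ((starRingEnd ℂ) f - (starRingEnd ℂ) M))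
      = (σ : ℂ) * ((f₁ - M) * ((starRingEnd ℂ) f₁ - (starRingEnd ℂ) M)) := by
    have e1 := sub_eq_zero.mp key1'
    have e2 := sub_eq_zero.mp key2'
    rw [e1, e2]
  -- nonvanishing of denominators
  have hden1 : f₁ - (M + (ρ : ℂ) * (f - M)) ≠ 0 := sub_ne_zero.mpr hd4
  have hden2 : (M + (σ : ℂ) * (f₁ - M)) - f ≠ 0 := sub_ne_zero.mpr (Ne.symm hd3)
  have hden2c : (starRingEnd ℂ) ((M + (σ : ℂ) * (f₁ - M)) - f) ≠ 0 := by
    simp only [ne_eq, map_eq_zero]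
    exact hden2
  have main : ((f - f₁) * ((M + (ρ : ℂ) * (f - M)) - (M + (σ : ℂ) * (f₁ - M)))) /
      ((f₁ - (M + (ρ : ℂ) * (f - M))) * ((M + (σ : ℂ) * (f₁ - M)) - f)) =
      (σ : ℂ) * ((‖f₁ - f‖ : ℝ) : ℂ) ^ 2 / ((‖(M + (σ : ℂ) * (f₁ - M)) - f‖ : ℝ) : ℂ) ^ 2 := by
    rw [norm_sq_conj_aux, norm_sq_conj_aux,
      div_eq_div_iff (mul_ne_zero hden1 hden2) (mul_ne_zero hden2 hden2c)]
    simp only [map_add, map_sub, map_mul, Complex.conj_ofReal]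
    linear_combination (((f - M) - (f₁ - M)) * ((σ : ℂ) * (f₁ - M) - (f - M)) * ((σ : ℂ) - 1)) * hkey
  refine ⟨main, ?_⟩
  intro s s₁ s₂ s₁₂ α₁ α₂ hs hs1 hs2 hs12 hρs hσs hα1 hα2
  rw [main]
  have hn1R : ‖f₁ - f‖ ≠ 0 := by
    simpa [sub_eq_zero] using (Ne.symm hd1)
  have hn2R : ‖(M + (σ : ℂ) * (f₁ - M)) - f‖ ≠ 0 := by
    simpa [sub_eq_zero] using hden2
  have hreal : σ * ‖f₁ - f‖ ^ 2 / ‖(M + (σ : ℂ) * (f₁ - M)) - f‖ ^ 2 = α₁ / α₂ := by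
    rw [hα1, hα2, hσs, div_div_div_comm, mul_div_mul_left _ _ hs]
    field_simp
  rw [← hreal]
  push_cast
  ring
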